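/- Let M = (E, 𝓘) be a matroid, let Δ ≥ 1 and μ ≥ 0 be integers, let w : E → ℤ satisfy −Δ ≤ w(e) ≤ Δ for all e ∈ E, and let A, B ∈ 𝓘 be disjoint independent sets with |A| = |B| = k and |w(A) − w(B)| ≤ μ. Then there exist subsets A' ⊆ A and B' ⊆ B of equal cardinality, each unicolor, such that: (i) (A \ A') ∪ B' ∈ 𝓘; (ii) |A'| = |B'| ≥ (k − μ)/(2Δ+1)⁴; and (iii) w(a) ≥ w(b) for every a ∈ A' and b ∈ B'. -/

import Mathlib

/-- A matroid on a finite ground set `E`, given by its family of independent sets. -/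
structure FinMatroid (E : Type*) [DecidableEq E] where
  Indep : Finset E → Prop
  empty_indep : Indep ∅
  subset_indep : ∀ ⦃X Y : Finset E⦄, X ⊆ Y → Indep Y → Indep X
  exchange : ∀ ⦃X Y : Finset E⦄, Indep X → Indep Y → X.card < Y.card →
    ∃ e ∈ Y \ X, Indep (insert e X)

namespace FinMatroid

open Finset
open scoped Classical

variable {E : Type*} [DecidableEq E] (M : FinMatroid E)

/-- rank of a finite set: max cardinality of an independent subset -/
noncomputable def rk (X : Finset E) : ℕ :=
  (X.powerset.filter fun J => M.Indep J).sup Finset.card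

variable {M}

lemma indep_card_le_rk {I X : Finset E} (hI : M.Indep I) (hIX : I ⊆ X) :
    I.card ≤ M.rk X :=
  Finset.le_sup (by simp [Finset.mem_filter, Finset.mem_powerset, hIX, hI])

lemma rk_le_card (X : Finset E) : M.rk X ≤ X.card :=
  Finset.sup_le fun J hJ =>
    Finset.card_le_card (Finset.mem_powerset.1 (Finset.mem_filter.1 hJ).1)

lemma rk_mono {X Y : Finset E} (h : X ⊆ Y) : M.rk X ≤ M.rk Y :=
  Finset.sup_le fun J hJ => by
    have hJ' := Finset.mem_filter.1 hJ
    exact indep_card_le_rk hJ'.2 ((Finset.mem_powerset.1 hJ'.1).trans h)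

lemma exists_basis (X : Finset E) :
    ∃ J, J ⊆ X ∧ M.Indep J ∧ J.card = M.rk X := by
  have hne : (X.powerset.filter fun J => M.Indep J).Nonempty :=
    ⟨∅, by simp [M.empty_indep]⟩
  obtain ⟨J, hJ, hJc⟩ := Finset.exists_mem_eq_sup _ hne Finset.card
  have hJ' := Finset.mem_filter.1 hJ
  exact ⟨J, Finset.mem_powerset.1 hJ'.1, hJ'.2, hJc.symm⟩

lemma grow {X Y : Finset E} (hX : M.Indep X) (hY : M.Indep Y) (h : X.card ≤ Y.card) :
    ∃ Z, M.Indep Z ∧ X ⊆ Z ∧ Z ⊆ X ∪ Y ∧ Z.card = Y.card := by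
  obtain ⟨n, hn⟩ : ∃ n, Y.card - X.card = n := ⟨_, rfl⟩
  induction n generalizing X with
  | zero =>
    exact ⟨X, hX, Finset.Subset.refl X, Finset.subset_union_left, by omega⟩
  | succ n ih =>
    have hlt : X.card < Y.card := by omega
    obtain ⟨e, he, hind⟩ := M.exchange hX hY hlt
    rw [Finset.mem_sdiff] at he
    have hc : (insert e X).card = X.card + 1 := Finset.card_insert_of_notMem he.2
    obtain ⟨Z, h1, h2, h3, h4⟩ := ih hind (by omega) (by omega)
    refine ⟨Z, h1, (Finset.subset_insert e X).trans h2, ?_, h4⟩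
    refine h3.trans ?_
    intro x hx
    rcases Finset.mem_union.1 hx with hx | hx
    · rcases Finset.mem_insert.1 hx with rfl | hx
      · exact Finset.mem_union_right _ he.1
      · exact Finset.mem_union_left _ hx
    · exact Finset.mem_union_right _ hx

lemma extend_to_rk {I X : Finset E} (hI : M.Indep I) (hIX : I ⊆ X) :
    ∃ J, M.Indep J ∧ I ⊆ J ∧ J ⊆ X ∧ J.card = M.rk X := by
  obtain ⟨J₀, hJ₀X, hJ₀i, hJ₀c⟩ := exists_basis (M := M) X
  have hle : I.card ≤ J₀.card := hJ₀c ▸ indep_card_le_rk hI hIX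
  obtain ⟨Z, h1, h2, h3, h4⟩ := grow hI hJ₀i hle
  exact ⟨Z, h1, h2, h3.trans (Finset.union_subset hIX hJ₀X), h4.trans hJ₀c⟩

lemma rk_indep_eq {X : Finset E} (hX : M.Indep X) : M.rk X = X.card :=
  le_antisymm (rk_le_card X) (indep_card_le_rk hX (Finset.Subset.refl X))

lemma rk_submod (X Y : Finset E) :
    M.rk (X ∩ Y) + M.rk (X ∪ Y) ≤ M.rk X + M.rk Y := by
  obtain ⟨J, hJss, hJi, hJc⟩ := exists_basis (M := M) (X ∩ Y)
  obtain ⟨J', hi', hsub', hss', hc'⟩ :=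
    extend_to_rk hJi (hJss.trans (Finset.inter_subset_union))
  have h1 : (J' ∩ X).card ≤ M.rk X :=
    indep_card_le_rk (M.subset_indep Finset.inter_subset_left hi') Finset.inter_subset_right
  have h2 : (J' ∩ Y).card ≤ M.rk Y :=
    indep_card_le_rk (M.subset_indep Finset.inter_subset_left hi') Finset.inter_subset_right
  have hu : (J' ∩ X) ∪ (J' ∩ Y) = J' := by
    rw [← Finset.inter_union_distrib_left]
    exact Finset.inter_eq_left.2 hss'
  have hJsub : J ⊆ (J' ∩ X) ∩ (J' ∩ Y) := by
    intro x hx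
    have hx' : x ∈ X ∩ Y := hJss hx
    rw [Finset.mem_inter] at hx' ⊢
    rw [Finset.mem_inter, Finset.mem_inter]
    exact ⟨⟨hsub' hx, hx'.1⟩, hsub' hx, hx'.2⟩
  have hcard := Finset.card_union_add_card_inter (J' ∩ X) (J' ∩ Y)
  rw [hu] at hcard
  have h3 : J.card ≤ ((J' ∩ X) ∩ (J' ∩ Y)).card := Finset.card_le_card hJsub
  omega

end FinMatroid

namespace FinMatroid
open Finset
open scoped Classical
variable {E : Type*} [DecidableEq E] {M : FinMatroid E}

lemma rk_chain (P A : Finset E) (S : ℤ → Finset E)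
    (hd : ∀ c c', c ≠ c' → Disjoint (S c) (S c')) (C : Finset ℤ) :
    C.card * M.rk (P ∪ A) + M.rk (P ∪ (A \ C.biUnion S)) ≤
      (∑ c ∈ C, M.rk (P ∪ (A \ S c))) + M.rk (P ∪ A) := by
  induction C using Finset.induction_on with
  | empty => simp
  | insert c₀ C hc₀ ih =>
    have hdisj : Disjoint (S c₀) (C.biUnion S) := by
      rw [Finset.disjoint_biUnion_right]
      intro c hc
      exact hd c₀ c (fun h => hc₀ (h ▸ hc))
    have hAeq : (A \ S c₀) ∪ (A \ C.biUnion S) = A := by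
      apply Finset.Subset.antisymm
      · exact Finset.union_subset (Finset.sdiff_subset) (Finset.sdiff_subset)
      · intro x hx
        by_cases hxS : x ∈ S c₀
        · exact Finset.mem_union_right _
            (Finset.mem_sdiff.2 ⟨hx, fun hxU => Finset.disjoint_left.1 hdisj hxS hxU⟩)
        · exact Finset.mem_union_left _ (Finset.mem_sdiff.2 ⟨hx, hxS⟩)
    have hXuY : (P ∪ (A \ S c₀)) ∪ (P ∪ (A \ C.biUnion S)) = P ∪ A := by
      rw [← Finset.union_union_distrib_left, hAeq]
    have hXiY : P ∪ (A \ (S c₀ ∪ C.biUnion S)) ⊆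
        (P ∪ (A \ S c₀)) ∩ (P ∪ (A \ C.biUnion S)) := by
      intro x hx
      rw [Finset.mem_inter]
      rcases Finset.mem_union.1 hx with hx | hx
      · exact ⟨Finset.mem_union_left _ hx, Finset.mem_union_left _ hx⟩
      · rw [Finset.mem_sdiff, Finset.mem_union] at hx
        push_neg at hx
        exact ⟨Finset.mem_union_right _ (Finset.mem_sdiff.2 ⟨hx.1, hx.2.1⟩),
          Finset.mem_union_right _ (Finset.mem_sdiff.2 ⟨hx.1, hx.2.2⟩)⟩
    have hsub := rk_submod (M := M) (P ∪ (A \ S c₀)) (P ∪ (A \ C.biUnion S))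
    rw [hXuY] at hsub
    have hmono : M.rk (P ∪ (A \ (S c₀ ∪ C.biUnion S))) ≤
        M.rk ((P ∪ (A \ S c₀)) ∩ (P ∪ (A \ C.biUnion S))) := rk_mono hXiY
    rw [Finset.card_insert_of_notMem hc₀, Finset.sum_insert hc₀, Finset.biUnion_insert, add_mul, one_mul]
    omega

lemma pigeon {ι : Type*} (s : Finset ι) (hs : s.Nonempty) (f : ι → ℤ) (V mm : ℤ)
    (hV : 0 ≤ V) (hsum : V ≤ ∑ i ∈ s, f i) (hcard : (s.card : ℤ) ≤ mm) :
    ∃ i ∈ s, V ≤ mm * f i := by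
  obtain ⟨i, hi, hmax⟩ := s.exists_max_image f hs
  refine ⟨i, hi, ?_⟩
  have h1 : ∑ j ∈ s, f j ≤ (s.card : ℤ) * f i := by
    have := Finset.sum_le_card_nsmul s f (f i) (fun x hx => hmax x hx)
    simpa [nsmul_eq_mul] using this
  have hcpos : (0:ℤ) < s.card := by exact_mod_cast Finset.card_pos.2 hs
  have hfi : 0 ≤ f i := by nlinarith
  calc V ≤ (s.card : ℤ) * f i := hsum.trans h1
    _ ≤ mm * f i := mul_le_mul_of_nonneg_right hcard hfi

lemma mul_step {a b s K : ℤ} (h : K ≤ a * s) (hab : a ≤ b) (hs : 0 ≤ s) : K ≤ b * s :=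
  h.trans (mul_le_mul_of_nonneg_right hab hs)

end FinMatroid

namespace FinMatroid
open Finset
open scoped Classical
variable {E : Type*} [DecidableEq E] {M : FinMatroid E}

lemma sum_filter_ge (Δ : ℕ) (w : E → ℤ) (A : Finset E) (hwA : ∀ a ∈ A, |w a| ≤ (Δ:ℤ)) :
    ∑ t ∈ Icc (-(Δ:ℤ)) (Δ:ℤ), ((A.filter fun a => t ≤ w a).card : ℤ)
      = ∑ a ∈ A, (w a + Δ + 1) := by
  calc ∑ t ∈ Icc (-(Δ:ℤ)) (Δ:ℤ), ((A.filter fun a => t ≤ w a).card : ℤ)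
      = ∑ t ∈ Icc (-(Δ:ℤ)) (Δ:ℤ), ∑ a ∈ A, (if t ≤ w a then (1:ℤ) else 0) := by
        refine Finset.sum_congr rfl fun t _ => ?_
        rw [Finset.sum_boole]
    _ = ∑ a ∈ A, ∑ t ∈ Icc (-(Δ:ℤ)) (Δ:ℤ), (if t ≤ w a then (1:ℤ) else 0) :=
        Finset.sum_comm
    _ = ∑ a ∈ A, (w a + Δ + 1) := by
        refine Finset.sum_congr rfl fun a ha => ?_
        rw [Finset.sum_boole]
        have habs := abs_le.1 (hwA a ha)
        have h1 : (Icc (-(Δ:ℤ)) (Δ:ℤ)).filter (fun t => t ≤ w a) = Icc (-(Δ:ℤ)) (w a) := by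
          ext x
          simp only [Finset.mem_filter, Finset.mem_Icc]
          omega
        rw [h1, Int.card_Icc]
        omega

lemma sum_filter_le (Δ : ℕ) (w : E → ℤ) (B : Finset E) (hwB : ∀ b ∈ B, |w b| ≤ (Δ:ℤ)) :
    ∑ t ∈ Icc (-(Δ:ℤ)) (Δ:ℤ), ((B.filter fun b => w b ≤ t).card : ℤ)
      = ∑ b ∈ B, ((Δ:ℤ) - w b + 1) := by
  calc ∑ t ∈ Icc (-(Δ:ℤ)) (Δ:ℤ), ((B.filter fun b => w b ≤ t).card : ℤ)
      = ∑ t ∈ Icc (-(Δ:ℤ)) (Δ:ℤ), ∑ b ∈ B, (if w b ≤ t then (1:ℤ) else 0) := by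
        refine Finset.sum_congr rfl fun t _ => ?_
        rw [Finset.sum_boole]
    _ = ∑ b ∈ B, ∑ t ∈ Icc (-(Δ:ℤ)) (Δ:ℤ), (if w b ≤ t then (1:ℤ) else 0) :=
        Finset.sum_comm
    _ = ∑ b ∈ B, ((Δ:ℤ) - w b + 1) := by
        refine Finset.sum_congr rfl fun b hb => ?_
        rw [Finset.sum_boole]
        have habs := abs_le.1 (hwB b hb)
        have h1 : (Icc (-(Δ:ℤ)) (Δ:ℤ)).filter (fun t => w b ≤ t) = Icc (w b) (Δ:ℤ) := by
          ext x
          simp only [Finset.mem_filter, Finset.mem_Icc]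
          omega
        rw [h1, Int.card_Icc]
        omega

lemma final_bound (Δ k μ : ℕ) (s : ℕ)
    (h : (k:ℤ) - (μ:ℤ) ≤ (2*(Δ:ℤ)+1)^4 * (s:ℤ)) :
    ((k:ℝ) - (μ:ℝ)) / (2*(Δ:ℝ)+1)^4 ≤ (s:ℝ) := by
  rw [div_le_iff₀ (by positivity)]
  have h' : ((k:ℝ) - (μ:ℝ)) ≤ (2*(Δ:ℝ)+1)^4 * (s:ℝ) := by exact_mod_cast h
  linarith [h']

end FinMatroid

lemma pow_facts {m : ℤ} (h3 : 3 ≤ m) :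
    2*m^3 ≤ m^4 ∧ m^2 ≤ m^4 ∧ m^3 ≤ m^4 ∧ 2*m^2 ≤ m^4 := by
  have h0 : (0:ℤ) ≤ m := by omega
  have h2 : (0:ℤ) ≤ m^2 := sq_nonneg m
  have hc3 : (0:ℤ) ≤ m^3 := by positivity
  refine ⟨by nlinarith, by nlinarith, by nlinarith, by nlinarith⟩

/-- A set is unicolor (w.r.t. `w`) if all its elements have the same weight. -/
def Unicolor {E : Type*} (w : E → ℤ) (S : Finset E) : Prop :=
  ∀ x ∈ S, ∀ y ∈ S, w x = w y

open Finset FinMatroid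
open scoped Classical

/-- Unicolor version of the monotone exchange lemma: the subsets `A' ⊆ A`, `B' ⊆ B`
can additionally be taken unicolor, with cardinality at least `(k − μ)/(2Δ+1)⁴`. -/
theorem monotone_exchange_unicolor {E : Type*} [DecidableEq E] [Fintype E]
    (M : FinMatroid E) (Δ μ : ℕ) (hΔ : 1 ≤ Δ)
    (w : E → ℤ) (hw : ∀ e, |w e| ≤ (Δ : ℤ))
    (A B : Finset E) (hA : M.Indep A) (hB : M.Indep B) (hAB : Disjoint A B)
    (k : ℕ) (hAk : A.card = k) (hBk : B.card = k)
    (hμ : |(∑ e ∈ A, w e) - (∑ e ∈ B, w e)| ≤ (μ : ℤ)) :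
    ∃ A' ⊆ A, ∃ B' ⊆ B,
      Unicolor w A' ∧ Unicolor w B' ∧
      M.Indep ((A \ A') ∪ B') ∧
      A'.card = B'.card ∧
      ((k : ℝ) - (μ : ℝ)) / (2 * (Δ : ℝ) + 1) ^ 4 ≤ (A'.card : ℝ) ∧
      (∀ a ∈ A', ∀ b ∈ B', w b ≤ w a) := by
  by_cases hk : (k:ℤ) ≤ (μ:ℤ)
  · refine ⟨∅, Finset.empty_subset A, ∅, Finset.empty_subset B, ?_, ?_, ?_, rfl, ?_, ?_⟩
    · intro x hx; simp at hx
    · intro x hx; simp at hx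
    · simpa using hA
    · have hknn : ((k:ℝ) - (μ:ℝ)) ≤ 0 := by
        have : (k:ℝ) ≤ (μ:ℝ) := by exact_mod_cast hk
        linarith
      have := div_nonpos_of_nonpos_of_nonneg hknn (by positivity : (0:ℝ) ≤ (2*(Δ:ℝ)+1)^4)
      simpa using this
    · intro a ha; simp at ha
  push_neg at hk
  -- Notation
  set Δ' : ℤ := (Δ:ℤ) with hΔ'
  set m : ℤ := 2*Δ' + 1 with hmdef
  have hm3 : (3:ℤ) ≤ m := by
    have : (1:ℤ) ≤ Δ' := by rw [hΔ']; exact_mod_cast hΔ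
    omega
  have hK1 : (1:ℤ) ≤ (k:ℤ) - (μ:ℤ) := by omega
  obtain ⟨hp1, hp2, hp3, hp4⟩ := pow_facts hm3
  have hm0 : (0:ℤ) ≤ m := by omega
  have hmsq : (0:ℤ) ≤ m^2 := sq_nonneg m
  -- Step 1 : find threshold t
  have hsumA := sum_filter_ge (E := E) Δ w A (fun a _ => hw a)
  have hsumB := sum_filter_le (E := E) Δ w B (fun b _ => hw b)
  have hμ' : -(μ:ℤ) ≤ (∑ e ∈ A, w e) - (∑ e ∈ B, w e) := (abs_le.1 hμ).1
  have hIccCard : (((Icc (-Δ') Δ').card : ℤ)) = m := by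
    rw [Int.card_Icc]; omega
  have hIccNe : (Icc (-Δ') Δ').Nonempty := ⟨0, by simp [Finset.mem_Icc]; omega⟩
  have he1 : ∑ a ∈ A, (w a + Δ' + 1) = (∑ a ∈ A, w a) + (k:ℤ) * (Δ' + 1) := by
    rw [show (fun a => w a + Δ' + 1) = fun a => w a + (Δ' + 1) by funext a; ring]
    rw [Finset.sum_add_distrib, Finset.sum_const, hAk]
    push_cast; ring
  have he2 : ∑ b ∈ B, (Δ' - w b + 1) = (k:ℤ) * (Δ' + 1) - (∑ b ∈ B, w b) := by
    rw [show (fun b => Δ' - w b + 1) = fun b => (Δ' + 1) - w b by funext b; ring]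
    rw [Finset.sum_sub_distrib, Finset.sum_const, hBk]
    push_cast; ring
  have hstep1 : (k:ℤ) - (μ:ℤ) ≤
      ∑ t ∈ Icc (-Δ') Δ',
        (((A.filter fun a => t ≤ w a).card : ℤ) + ((B.filter fun b => w b ≤ t).card : ℤ)
          - (k:ℤ)) := by
    rw [Finset.sum_sub_distrib, Finset.sum_add_distrib, Finset.sum_const,
      nsmul_eq_mul, hsumA, hsumB, he1, he2, hIccCard]
    have hΔ1 : (1:ℤ) ≤ Δ' := by rw [hΔ']; exact_mod_cast hΔ
    nlinarith [hμ']
  obtain ⟨t, htIcc, ht⟩ := pigeon (Icc (-Δ') Δ') hIccNe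
    (fun t => ((A.filter fun a => t ≤ w a).card : ℤ) + ((B.filter fun b => w b ≤ t).card : ℤ)
      - (k:ℤ)) ((k:ℤ) - (μ:ℤ)) m (by omega) hstep1 (le_of_eq hIccCard)
  have htmem := Finset.mem_Icc.1 htIcc
  -- definitions around t
  set P : Finset E := B.filter fun b => w b ≤ t with hPdef
  set Ac : ℤ → Finset E := fun c => A.filter fun a => w a = c with hAcdef
  set α : ℤ := ((A.filter fun a => t ≤ w a).card : ℤ) with hαdef
  set β : ℤ := ((P.card : ℕ) : ℤ) with hβdef
  set D : ℤ := α + β - (k:ℤ) with hDdef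
  have ht' : (k:ℤ) - (μ:ℤ) ≤ m * D := ht
  have hAcA : ∀ c, Ac c ⊆ A := fun c => Finset.filter_subset _ _
  have hAcdisj : ∀ c c', c ≠ c' → Disjoint (Ac c) (Ac c') := by
    intro c c' hcc
    rw [Finset.disjoint_left]
    intro x hx hx'
    exact hcc ((Finset.mem_filter.1 hx).2.symm.trans (Finset.mem_filter.1 hx').2)
  have hPB : P ⊆ B := Finset.filter_subset _ _
  have hPindep : M.Indep P := M.subset_indep hPB hB
  have hβk : β ≤ (k:ℤ) := by
    have := Finset.card_le_card hPB
    rw [hβdef]; rw [hBk] at this; exact_mod_cast this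
  have hD1 : (1:ℤ) ≤ D := by
    by_contra h
    push_neg at h
    have h0 : D ≤ 0 := by omega
    have hmn : (0:ℤ) ≤ m := by omega
    have : m * D ≤ 0 := mul_nonpos_of_nonneg_of_nonpos hmn h0
    omega
  -- the color classes partition A_{≥ t}
  have hbiU : (Icc t Δ').biUnion Ac = A.filter fun a => t ≤ w a := by
    ext a
    simp only [Finset.mem_biUnion, Finset.mem_Icc, hAcdef, Finset.mem_filter]
    constructor
    · rintro ⟨c, ⟨h1, h2⟩, ha, hc⟩
      exact ⟨ha, by omega⟩
    · rintro ⟨ha, hta⟩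
      exact ⟨w a, ⟨hta, (abs_le.1 (hw a)).2⟩, ha, rfl⟩
  have hsumAc : ∑ c ∈ Icc t Δ', ((Ac c).card : ℤ) = α := by
    rw [hαdef, ← hbiU]
    rw [Finset.card_biUnion (fun c hc c' hc' h => hAcdisj c c' h)]
    push_cast; ring
  -- chain inequality
  have hCne : (Icc t Δ').Nonempty := ⟨t, Finset.mem_Icc.2 ⟨le_refl t, htmem.2⟩⟩
  have hCcard : (((Icc t Δ').card : ℕ) : ℤ) = Δ' - t + 1 := by
    rw [Int.card_Icc]; omega
  have hCle : (((Icc t Δ').card : ℕ) : ℤ) ≤ m := by omega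
  have hchain := rk_chain (M := M) P A Ac hAcdisj (Icc t Δ')
  have hchainZ : (((Icc t Δ').card : ℕ) : ℤ) * (M.rk (P ∪ A) : ℤ)
      + (M.rk (P ∪ (A \ (Icc t Δ').biUnion Ac)) : ℤ)
      ≤ (∑ c ∈ Icc t Δ', (M.rk (P ∪ (A \ Ac c)) : ℤ)) + (M.rk (P ∪ A) : ℤ) := by
    exact_mod_cast hchain
  set σ : ℤ → ℤ := fun c => (M.rk (P ∪ (A \ Ac c)) : ℤ) - ((k:ℤ) - ((Ac c).card : ℤ))
    with hσdef
  have hσval : ∀ c, σ c = (M.rk (P ∪ (A \ Ac c)) : ℤ) - ((k:ℤ) - ((Ac c).card : ℤ)) :=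
    fun c => congrFun hσdef c
  have hAsdind : ∀ c, M.Indep (A \ Ac c) := fun c => M.subset_indep (Finset.sdiff_subset) hA
  have hAsdcard : ∀ c, (((A \ Ac c).card : ℕ) : ℤ) = (k:ℤ) - ((Ac c).card : ℤ) := by
    intro c
    rw [Finset.card_sdiff_of_subset (hAcA c), hAk]
    have := Finset.card_le_card (hAcA c)
    rw [hAk] at this
    push_cast [this]
    omega
  have hσ0 : ∀ c, 0 ≤ σ c := by
    intro c
    have h1 : (A \ Ac c).card ≤ M.rk (P ∪ (A \ Ac c)) :=
      indep_card_le_rk (hAsdind c) (Finset.subset_union_right : A \ Ac c ⊆ P ∪ (A \ Ac c))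
    have h2 := hAsdcard c
    rw [hσval c]
    have h1' : (((A \ Ac c).card : ℕ) : ℤ) ≤ (M.rk (P ∪ (A \ Ac c)) : ℤ) := by exact_mod_cast h1
    omega
  have hRk : (k:ℤ) ≤ (M.rk (P ∪ A) : ℤ) := by
    have := indep_card_le_rk hA (Finset.subset_union_right : A ⊆ P ∪ A)
    rw [hAk] at this
    exact_mod_cast this
  have hRP : β ≤ (M.rk (P ∪ (A \ (Icc t Δ').biUnion Ac)) : ℤ) := by
    have := indep_card_le_rk hPindep (Finset.subset_union_left : P ⊆ P ∪ (A \ (Icc t Δ').biUnion Ac))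
    rw [hβdef]
    exact_mod_cast this
  have hSsig : D ≤ ∑ c ∈ Icc t Δ', σ c := by
    have hsum_sigma : ∑ c ∈ Icc t Δ', σ c
        = (∑ c ∈ Icc t Δ', (M.rk (P ∪ (A \ Ac c)) : ℤ))
          - ((((Icc t Δ').card : ℕ) : ℤ) * (k:ℤ) - α) := by
      rw [Finset.sum_congr rfl (fun c _ => hσval c)]
      rw [Finset.sum_sub_distrib, Finset.sum_sub_distrib, Finset.sum_const, nsmul_eq_mul,
        hsumAc]
    have hc1 : (1:ℤ) ≤ (((Icc t Δ').card : ℕ) : ℤ) := by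
      have := Finset.card_pos.2 hCne
      exact_mod_cast this
    have hmul : ((((Icc t Δ').card : ℕ) : ℤ) - 1) * (k:ℤ)
        ≤ ((((Icc t Δ').card : ℕ) : ℤ) - 1) * (M.rk (P ∪ A) : ℤ) :=
      mul_le_mul_of_nonneg_left hRk (by omega)
    have e1 : ((((Icc t Δ').card : ℕ) : ℤ) - 1) * (k:ℤ)
        = (((Icc t Δ').card : ℕ) : ℤ) * (k:ℤ) - (k:ℤ) := by ring
    have e2 : ((((Icc t Δ').card : ℕ) : ℤ) - 1) * (M.rk (P ∪ A) : ℤ)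
        = (((Icc t Δ').card : ℕ) : ℤ) * (M.rk (P ∪ A) : ℤ) - (M.rk (P ∪ A) : ℤ) := by ring
    rw [hsum_sigma, hDdef]
    linarith [hchainZ, hRP, hmul, e1, e2]
  obtain ⟨c, hcIcc, hcσ⟩ := pigeon (Icc t Δ') hCne σ D m (by omega) hSsig hCle
  have hcmem := Finset.mem_Icc.1 hcIcc
  have hKm2σ : (k:ℤ) - (μ:ℤ) ≤ m^2 * σ c := by
    have h1 : m * D ≤ m * (m * σ c) := mul_le_mul_of_nonneg_left hcσ (by omega)
    calc (k:ℤ) - (μ:ℤ) ≤ m * D := ht'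
      _ ≤ m * (m * σ c) := h1
      _ = m^2 * σ c := by ring
  set φ : ℤ := (M.rk (P ∪ A) : ℤ) - (k:ℤ) with hφdef
  have hφ0 : 0 ≤ φ := by omega
  -- Icc (-Δ') t facts for color d pigeonhole
  have hDne : (Icc (-Δ') t).Nonempty := ⟨t, Finset.mem_Icc.2 ⟨htmem.1, le_refl t⟩⟩
  have hDle : (((Icc (-Δ') t).card : ℕ) : ℤ) ≤ m := by
    rw [Int.card_Icc]; omega
  by_cases hcase : (k:ℤ) - (μ:ℤ) ≤ 2 * m^2 * φ
  · -- CASE A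
    obtain ⟨J, hJi, hAJ, hJsub, hJc⟩ :=
      extend_to_rk (M := M) hA (Finset.subset_union_right : A ⊆ P ∪ A)
    set B'' : Finset E := J \ A with hB''def
    have hB''P : B'' ⊆ P := by
      intro x hx
      rw [hB''def, Finset.mem_sdiff] at hx
      rcases Finset.mem_union.1 (hJsub hx.1) with h | h
      · exact h
      · exact absurd h hx.2
    have hB''card : ((B''.card : ℕ) : ℤ) = φ := by
      rw [hB''def, Finset.card_sdiff_of_subset hAJ, hφdef, hJc]
      have := Finset.card_le_card hAJ
      rw [hAk] at this ⊢
      push_cast [this]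
      omega
    have hfib : B''.card = ∑ d ∈ Icc (-Δ') t, (B''.filter fun b => w b = d).card :=
      Finset.card_eq_sum_card_fiberwise (fun x hx =>
        Finset.mem_Icc.2 ⟨(abs_le.1 (hw x)).1, (Finset.mem_filter.1 (hB''P hx)).2⟩)
    have hfibZ : φ ≤ ∑ d ∈ Icc (-Δ') t, (((B''.filter fun b => w b = d).card : ℕ) : ℤ) := by
      rw [← hB''card]
      exact_mod_cast le_of_eq hfib
    obtain ⟨d, hdIcc, hd⟩ := pigeon (Icc (-Δ') t) hDne
      (fun d => (((B''.filter fun b => w b = d).card : ℕ) : ℤ)) φ m hφ0 hfibZ hDle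
    have hdmem := Finset.mem_Icc.1 hdIcc
    -- argmax color c' in A
    have hα0 : 0 ≤ α := by rw [hαdef]; exact Int.natCast_nonneg _
    obtain ⟨c', hc'Icc, hc'⟩ := pigeon (Icc t Δ') hCne (fun c => ((Ac c).card : ℤ)) α m
      hα0 (le_of_eq hsumAc.symm) hCle
    have hc'mem := Finset.mem_Icc.1 hc'Icc
    have hαD : D ≤ α := by omega
    set s : ℕ := min (B''.filter fun b => w b = d).card (Ac c').card with hsdef
    obtain ⟨B', hB'sub, hB'card⟩ :=
      Finset.exists_subset_card_eq (min_le_left (B''.filter fun b => w b = d).card (Ac c').card)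
    obtain ⟨A', hA'sub, hA'card⟩ :=
      Finset.exists_subset_card_eq (min_le_right (B''.filter fun b => w b = d).card (Ac c').card)
    have hA'A : A' ⊆ A := hA'sub.trans (hAcA c')
    have hB'B : B' ⊆ B := hB'sub.trans ((Finset.filter_subset _ _).trans (hB''P.trans hPB))
    have hfinal : (k:ℤ) - (μ:ℤ) ≤ m^4 * (s:ℤ) := by
      have hs0 : (0:ℤ) ≤ (s:ℤ) := Int.natCast_nonneg _
      rcases min_cases (B''.filter fun b => w b = d).card (Ac c').card with ⟨heq, hle⟩ | ⟨heq, hle⟩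
      · -- s = |B''_d|
        have hds : φ ≤ m * (s:ℤ) := by
          rw [hsdef, heq]; exact hd
        have h1 : (k:ℤ) - (μ:ℤ) ≤ 2*m^2 * (m * (s:ℤ)) :=
          hcase.trans (mul_le_mul_of_nonneg_left hds (by linarith [hmsq]))
        have h2 : 2*m^3 ≤ m^4 := hp1
        calc (k:ℤ) - (μ:ℤ) ≤ 2*m^2 * (m * (s:ℤ)) := h1
          _ = 2*m^3 * (s:ℤ) := by ring
          _ ≤ m^4 * (s:ℤ) := mul_le_mul_of_nonneg_right h2 hs0
      · -- s = |Ac c'|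
        have hds : α ≤ m * (s:ℤ) := by
          rw [hsdef, heq]; exact hc'
        have h1 : (k:ℤ) - (μ:ℤ) ≤ m * (m * (s:ℤ)) := by
          calc (k:ℤ) - (μ:ℤ) ≤ m * D := ht'
            _ ≤ m * α := mul_le_mul_of_nonneg_left hαD (by omega)
            _ ≤ m * (m * (s:ℤ)) := mul_le_mul_of_nonneg_left hds (by omega)
        have h2 : m^2 ≤ m^4 := hp2
        calc (k:ℤ) - (μ:ℤ) ≤ m * (m * (s:ℤ)) := h1
          _ = m^2 * (s:ℤ) := by ring
          _ ≤ m^4 * (s:ℤ) := mul_le_mul_of_nonneg_right h2 hs0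
    refine ⟨A', hA'A, B', hB'B, ?_, ?_, ?_, ?_, ?_, ?_⟩
    · intro x hx y hy
      have hx' := (Finset.mem_filter.1 (hA'sub hx)).2
      have hy' := (Finset.mem_filter.1 (hA'sub hy)).2
      rw [hx', hy']
    · intro x hx y hy
      have hx' := (Finset.mem_filter.1 (hB'sub hx)).2
      have hy' := (Finset.mem_filter.1 (hB'sub hy)).2
      rw [hx', hy']
    · refine M.subset_indep ?_ hJi
      refine Finset.union_subset ((Finset.sdiff_subset).trans hAJ) ?_
      refine hB'sub.trans ((Finset.filter_subset _ _).trans ?_)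
      rw [hB''def]
      exact Finset.sdiff_subset
    · rw [hA'card, hB'card]
    · rw [hA'card]
      have := final_bound Δ k μ s (by rw [← hΔ', ← hmdef]; exact hfinal)
      exact this
    · intro a ha b hb
      have hwa := (Finset.mem_filter.1 (hA'sub ha)).2
      have hwb := (Finset.mem_filter.1 (hB'sub hb)).2
      rw [hwa, hwb]
      omega
  · -- CASE B
    rw [not_le] at hcase
    have hcase' : 2 * m^2 * φ ≤ (k:ℤ) - (μ:ℤ) - 1 := by omega
    set C₀ : Finset E := A \ Ac c with hC₀def
    obtain ⟨J, hJi, hC₀J, hJsub, hJc⟩ :=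
      extend_to_rk (M := M) (hAsdind c) (Finset.subset_union_right : A \ Ac c ⊆ P ∪ (A \ Ac c))
    set B'' : Finset E := J \ C₀ with hB''def
    have hB''P : B'' ⊆ P := by
      intro x hx
      rw [hB''def, Finset.mem_sdiff] at hx
      rcases Finset.mem_union.1 (hJsub hx.1) with h | h
      · exact h
      · exact absurd h hx.2
    have hB''card : ((B''.card : ℕ) : ℤ) = σ c := by
      have hcc : B''.card = J.card - C₀.card := by
        rw [hB''def]; exact Finset.card_sdiff_of_subset hC₀J
      have h1 := Finset.card_le_card hC₀J
      have h2 := hAsdcard c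
      have h3 : C₀.card = (A \ Ac c).card := by rw [hC₀def]
      have h4 : (J.card : ℤ) = (M.rk (P ∪ (A \ Ac c)) : ℤ) := by exact_mod_cast hJc
      rw [hσval c, hcc]
      push_cast [h1]
      omega
    have hfib : B''.card = ∑ d ∈ Icc (-Δ') t, (B''.filter fun b => w b = d).card :=
      Finset.card_eq_sum_card_fiberwise (fun x hx =>
        Finset.mem_Icc.2 ⟨(abs_le.1 (hw x)).1, (Finset.mem_filter.1 (hB''P hx)).2⟩)
    have hfibZ : σ c ≤ ∑ d ∈ Icc (-Δ') t, (((B''.filter fun b => w b = d).card : ℕ) : ℤ) := by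
      rw [← hB''card]
      exact_mod_cast le_of_eq hfib
    obtain ⟨d, hdIcc, hd⟩ := pigeon (Icc (-Δ') t) hDne
      (fun d => (((B''.filter fun b => w b = d).card : ℕ) : ℤ)) (σ c) m (hσ0 c) hfibZ hDle
    have hdmem := Finset.mem_Icc.1 hdIcc
    -- lower bound on |Ac c|
    have hσφ : σ c ≤ φ + ((Ac c).card : ℤ) := by
      have hmono : M.rk (P ∪ (A \ Ac c)) ≤ M.rk (P ∪ A) :=
        rk_mono (Finset.union_subset_union_right (Finset.sdiff_subset))
      have hmono' : (M.rk (P ∪ (A \ Ac c)) : ℤ) ≤ (M.rk (P ∪ A) : ℤ) := by exact_mod_cast hmono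
      rw [hσval c]
      omega
    have h2m2Ac : (k:ℤ) - (μ:ℤ) ≤ 2 * m^2 * ((Ac c).card : ℤ) := by
      have h1 : m^2 * σ c ≤ m^2 * (φ + ((Ac c).card : ℤ)) :=
        mul_le_mul_of_nonneg_left hσφ hmsq
      have e : m^2 * (φ + ((Ac c).card:ℤ)) = m^2*φ + m^2*((Ac c).card:ℤ) := by ring
      linarith [hKm2σ, h1, e, hcase']
    set s : ℕ := min (B''.filter fun b => w b = d).card (Ac c).card with hsdef
    obtain ⟨B', hB'sub, hB'card⟩ :=
      Finset.exists_subset_card_eq (min_le_left (B''.filter fun b => w b = d).card (Ac c).card)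
    have hB'B : B' ⊆ B := hB'sub.trans ((Finset.filter_subset _ _).trans (hB''P.trans hPB))
    -- grow B' ∪ C₀ inside A
    have hB'C₀indep : M.Indep (B' ∪ C₀) := by
      refine M.subset_indep (Finset.union_subset ?_ hC₀J) hJi
      refine hB'sub.trans ((Finset.filter_subset _ _).trans ?_)
      rw [hB''def]; exact Finset.sdiff_subset
    have hB'A : Disjoint B' A := (Finset.disjoint_of_subset_left hB'B hAB.symm)
    have hB'C₀disj : Disjoint B' C₀ := Finset.disjoint_of_subset_right (Finset.sdiff_subset) hB'A
    have hsAc : s ≤ (Ac c).card := min_le_right _ _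
    have hAccard : (Ac c).card ≤ k := by
      rw [← hAk]; exact Finset.card_le_card (hAcA c)
    have hC₀card : C₀.card = k - (Ac c).card := by
      rw [hC₀def, Finset.card_sdiff_of_subset (hAcA c), hAk]
    have hcardle : (B' ∪ C₀).card ≤ A.card := by
      rw [Finset.card_union_of_disjoint hB'C₀disj, hB'card, hC₀card, hAk]
      omega
    obtain ⟨Z, hZi, hZsub1, hZsub2, hZcard⟩ := grow hB'C₀indep hA hcardle
    set A' : Finset E := A \ Z with hA'def
    have hC₀Z : C₀ ⊆ Z := (Finset.subset_union_right : C₀ ⊆ B' ∪ C₀).trans hZsub1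
    have hB'Z : B' ⊆ Z := (Finset.subset_union_left : B' ⊆ B' ∪ C₀).trans hZsub1
    have hA'Ac : A' ⊆ Ac c := by
      intro x hx
      rw [hA'def, Finset.mem_sdiff] at hx
      have hxA := hx.1
      by_contra hxc
      have : x ∈ C₀ := by rw [hC₀def, Finset.mem_sdiff]; exact ⟨hxA, hxc⟩
      exact hx.2 (hC₀Z this)
    have hA'A : A' ⊆ A := Finset.sdiff_subset
    have hZA : Z \ A = B' := by
      apply Finset.Subset.antisymm
      · intro x hx
        rw [Finset.mem_sdiff] at hx
        rcases Finset.mem_union.1 (hZsub2 hx.1) with h | h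
        · rcases Finset.mem_union.1 h with h' | h'
          · exact h'
          · exact absurd ((Finset.sdiff_subset) h') hx.2
        · exact absurd h hx.2
      · intro x hx
        rw [Finset.mem_sdiff]
        exact ⟨hB'Z hx, Finset.disjoint_left.1 hB'A hx⟩
    have hZinter : (Z ∩ A).card = k - s := by
      have h1 : (Z ∩ A).card + (Z \ A).card = Z.card := by
        rw [Finset.card_inter_add_card_sdiff]
      rw [hZA, hB'card, hZcard, hAk] at h1
      omega
    have hA'card : A'.card = s := by
      have h1 : A'.card + (A ∩ Z).card = A.card := by
        rw [hA'def, Finset.card_sdiff_add_card_inter]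
      rw [Finset.inter_comm] at h1
      rw [hZinter, hAk] at h1
      have hsk : s ≤ k := le_trans hsAc hAccard
      omega
    have hkey : (A \ A') ∪ B' = Z := by
      rw [hA'def, Finset.sdiff_sdiff_self_left, ← hZA]
      ext x
      simp only [Finset.mem_union, Finset.mem_inter, Finset.mem_sdiff]
      constructor
      · rintro (⟨h1, h2⟩ | ⟨h1, h2⟩)
        · exact h2
        · exact h1
      · intro hxZ
        by_cases hxA : x ∈ A
        · exact Or.inl ⟨hxA, hxZ⟩
        · exact Or.inr ⟨hxZ, hxA⟩
    have hfinal : (k:ℤ) - (μ:ℤ) ≤ m^4 * (s:ℤ) := by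
      have hs0 : (0:ℤ) ≤ (s:ℤ) := Int.natCast_nonneg _
      rcases min_cases (B''.filter fun b => w b = d).card (Ac c).card with ⟨heq, hle⟩ | ⟨heq, hle⟩
      · have hds : σ c ≤ m * (s:ℤ) := by
          rw [hsdef, heq]; exact hd
        have h1 : (k:ℤ) - (μ:ℤ) ≤ m^2 * (m * (s:ℤ)) :=
          hKm2σ.trans (mul_le_mul_of_nonneg_left hds hmsq)
        have h2 : m^3 ≤ m^4 := hp3
        calc (k:ℤ) - (μ:ℤ) ≤ m^2 * (m * (s:ℤ)) := h1
          _ = m^3 * (s:ℤ) := by ring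
          _ ≤ m^4 * (s:ℤ) := mul_le_mul_of_nonneg_right h2 hs0
      · have hds : ((Ac c).card : ℤ) = (s:ℤ) := by
          rw [hsdef, heq]
        have h1 : (k:ℤ) - (μ:ℤ) ≤ 2*m^2 * (s:ℤ) := by
          rw [← hds]; exact h2m2Ac
        have h2 : 2*m^2 ≤ m^4 := hp4
        calc (k:ℤ) - (μ:ℤ) ≤ 2*m^2 * (s:ℤ) := h1
          _ ≤ m^4 * (s:ℤ) := mul_le_mul_of_nonneg_right h2 hs0
    refine ⟨A', hA'A, B', hB'B, ?_, ?_, ?_, ?_, ?_, ?_⟩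
    · intro x hx y hy
      have hx' := (Finset.mem_filter.1 (hA'Ac hx)).2
      have hy' := (Finset.mem_filter.1 (hA'Ac hy)).2
      rw [hx', hy']
    · intro x hx y hy
      have hx' := (Finset.mem_filter.1 (hB'sub hx)).2
      have hy' := (Finset.mem_filter.1 (hB'sub hy)).2
      rw [hx', hy']
    · rw [hkey]; exact hZi
    · rw [hA'card, hB'card]
    · rw [hA'card]
      exact final_bound Δ k μ s (by rw [← hΔ', ← hmdef]; exact hfinal)
    · intro a ha b hb
      have hwa := (Finset.mem_filter.1 (hA'Ac ha)).2
      have hwb := (Finset.mem_filter.1 (hB'sub hb)).2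
      rw [hwa, hwb]
      omega
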